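/- Let A, B > 0, κ = B/A, σ > 1/2, and for each n let I_n(f) = ∑_{k=1}^{L_n} f(x_{n,k}) w_{n,k} be a quadrature rule with nodes x_{n,k} ∈ 𝕋 and complex weights w_{n,k} such that I_n(p) = ∫₀¹ p(x) dx for all p ∈ 𝒯_n and |I_n(g)| ≤ √κ ‖g‖_∞ for every continuous g on 𝕋. Then for every f ∈ H^σ(𝕋) (identified with its continuous representative) and every n ≥ 1, |∫₀¹ f(x) dx − I_n(f)| ≤ (1 + √κ) (σ − 1/2)^{-1/2} n^{-σ+1/2} ‖f‖_{H^σ}. -/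

import Mathlib

open MeasureTheory AddCircle

noncomputable section

/-- The torus `𝕋 = ℝ/ℤ`. -/
abbrev Torus := UnitAddCircle

/-- Normalized Haar (Lebesgue) probability measure on the torus. -/
abbrev haar : Measure Torus := AddCircle.haarAddCircle

/-- `p` is a trigonometric polynomial of degree `n`. -/
def IsTrigPoly (n : ℕ) (p : Torus → ℂ) : Prop :=
  ∃ c : ℤ → ℂ, p = fun x => ∑ l ∈ Finset.Icc (-(n : ℤ)) (n : ℤ), c l * fourier l x

/-- The square of the Sobolev norm `‖f‖_{H^σ}² = ∑_{k∈ℤ} |f̂(k)|² (1+k²)^σ`. -/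
def sobolevNormSq (σ : ℝ) (f : Torus → ℂ) : ℝ :=
  ∑' k : ℤ, ‖fourierCoeff f k‖ ^ 2 * (1 + (k : ℝ) ^ 2) ^ σ

/-- Membership in the Sobolev space `H^σ(𝕋)`. -/
def InHσ (σ : ℝ) (f : Torus → ℂ) : Prop :=
  MemLp f 2 haar ∧ Summable (fun k : ℤ => ‖fourierCoeff f k‖ ^ 2 * (1 + (k : ℝ) ^ 2) ^ σ)

private lemma rpow_sq_eq (x : ℝ) (hx : 0 ≤ x) (r : ℝ) : (x ^ r) ^ 2 = x ^ (r * 2) := by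
  rw [← Real.rpow_natCast (x ^ r) 2, ← Real.rpow_mul hx]
  norm_num

/-- Cauchy–Schwarz for infinite sums of nonnegative reals. -/
private lemma tsum_mul_le_sqrt {ι : Type*} (u v : ι → ℝ) (hu0 : ∀ i, 0 ≤ u i)
    (hv0 : ∀ i, 0 ≤ v i) (hu : Summable fun i => u i ^ 2) (hv : Summable fun i => v i ^ 2) :
    ∑' i, u i * v i ≤ Real.sqrt (∑' i, u i ^ 2) * Real.sqrt (∑' i, v i ^ 2) := by
  refine tsum_le_of_sum_le' (mul_nonneg (Real.sqrt_nonneg _) (Real.sqrt_nonneg _)) fun s => ?_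
  have h0 : 0 ≤ ∑ i ∈ s, u i * v i := Finset.sum_nonneg fun i _ => mul_nonneg (hu0 i) (hv0 i)
  calc ∑ i ∈ s, u i * v i = Real.sqrt ((∑ i ∈ s, u i * v i) ^ 2) := (Real.sqrt_sq h0).symm
    _ ≤ Real.sqrt ((∑ i ∈ s, u i ^ 2) * ∑ i ∈ s, v i ^ 2) :=
        Real.sqrt_le_sqrt (Finset.sum_mul_sq_le_sq_mul_sq s u v)
    _ = Real.sqrt (∑ i ∈ s, u i ^ 2) * Real.sqrt (∑ i ∈ s, v i ^ 2) :=
        Real.sqrt_mul (Finset.sum_nonneg fun i _ => sq_nonneg _) _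
    _ ≤ Real.sqrt (∑' i, u i ^ 2) * Real.sqrt (∑' i, v i ^ 2) :=
        mul_le_mul (Real.sqrt_le_sqrt (Summable.sum_le_tsum s (fun i _ => sq_nonneg _) hu))
          (Real.sqrt_le_sqrt (Summable.sum_le_tsum s (fun i _ => sq_nonneg _) hv))
          (Real.sqrt_nonneg _) (Real.sqrt_nonneg _)

/-- Tail bound for `∑ (1+l²)^{-σ}` over integer frequencies beyond `n`. -/
private lemma tail_sum_bound {σ : ℝ} (hσ : 1 / 2 < σ) {n : ℕ} (hn : 1 ≤ n)
    (F : Finset ℤ) (hF : ∀ l ∈ F, l ∉ Finset.Icc (-(n : ℤ)) (n : ℤ)) :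
    ∑ l ∈ F, (1 + (l : ℝ) ^ 2) ^ (-σ) ≤ (σ - 1 / 2)⁻¹ * (n : ℝ) ^ (1 - 2 * σ) := by
  have h2σ : (0:ℝ) < 2 * σ - 1 := by linarith
  have hg0 : ∀ m : ℕ, 0 ≤ ((m : ℝ)) ^ (-(2 * σ)) := fun m => Real.rpow_nonneg (Nat.cast_nonneg m) _
  have hRHS0 : 0 ≤ (σ - 1 / 2)⁻¹ * (n : ℝ) ^ (1 - 2 * σ) :=
    mul_nonneg (inv_nonneg.2 (by linarith)) (Real.rpow_nonneg (Nat.cast_nonneg n) _)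
  have habs : ∀ l ∈ F, n + 1 ≤ l.natAbs := by
    intro l hl
    have := hF l hl
    simp only [Finset.mem_Icc, not_and_or, not_le] at this
    omega
  have hpt : ∀ l ∈ F, (1 + (l : ℝ) ^ 2) ^ (-σ) ≤ ((l.natAbs : ℝ)) ^ (-(2 * σ)) := by
    intro l hl
    have h1n : (1:ℝ) ≤ (l.natAbs : ℝ) := by
      have h := habs l hl
      have : 1 ≤ l.natAbs := by omega
      exact_mod_cast this
    have h1 : (0:ℝ) < ((l.natAbs : ℝ)) ^ 2 := by positivity
    have hcast : ((l.natAbs : ℝ)) ^ 2 = (l : ℝ) ^ 2 := by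
      have h2 : ((l.natAbs ^ 2 : ℕ) : ℤ) = l ^ 2 := Int.natAbs_sq l
      have h3 := congrArg (fun z : ℤ => (z : ℝ)) h2
      push_cast [Nat.cast_natAbs] at h3 ⊢
      exact h3
    have h2 : ((l.natAbs : ℝ)) ^ 2 ≤ 1 + (l : ℝ) ^ 2 := by rw [hcast]; linarith
    calc (1 + (l : ℝ) ^ 2) ^ (-σ) ≤ (((l.natAbs : ℝ)) ^ 2) ^ (-σ) :=
          Real.rpow_le_rpow_of_nonpos h1 h2 (by linarith)
      _ = ((l.natAbs : ℝ)) ^ (-(2 * σ)) := by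
          rw [← Real.rpow_natCast ((l.natAbs : ℝ)) 2, ← Real.rpow_mul (by positivity)]
          norm_num
  calc ∑ l ∈ F, (1 + (l : ℝ) ^ 2) ^ (-σ) ≤ ∑ l ∈ F, ((l.natAbs : ℝ)) ^ (-(2 * σ)) :=
        Finset.sum_le_sum hpt
    _ = ∑ m ∈ F.image Int.natAbs, (F.filter fun l => l.natAbs = m).card • ((m : ℝ)) ^ (-(2 * σ)) :=
        Finset.sum_comp (fun m : ℕ => ((m : ℝ)) ^ (-(2 * σ))) Int.natAbs
    _ ≤ ∑ m ∈ F.image Int.natAbs, 2 * ((m : ℝ)) ^ (-(2 * σ)) := by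
        refine Finset.sum_le_sum fun m hm => ?_
        rw [nsmul_eq_mul]
        have hsub : (F.filter fun l => l.natAbs = m) ⊆ {(m : ℤ), -(m : ℤ)} := by
          intro l hl
          simp only [Finset.mem_filter] at hl
          simp only [Finset.mem_insert, Finset.mem_singleton]
          omega
        have hcard : (F.filter fun l => l.natAbs = m).card ≤ 2 :=
          (Finset.card_le_card hsub).trans ((Finset.card_insert_le _ _).trans (by simp))
        exact mul_le_mul_of_nonneg_right (by exact_mod_cast hcard) (hg0 m)
    _ = 2 * ∑ m ∈ F.image Int.natAbs, ((m : ℝ)) ^ (-(2 * σ)) := (Finset.mul_sum _ _ _).symm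
    _ ≤ (σ - 1 / 2)⁻¹ * (n : ℝ) ^ (1 - 2 * σ) := by
        rcases Finset.eq_empty_or_nonempty (F.image Int.natAbs) with hGe | hGne
        · rw [hGe]; simpa using hRHS0
        set G := F.image Int.natAbs with hGdef
        have hG : ∀ m ∈ G, n + 1 ≤ m := by
          intro m hm
          rw [hGdef, Finset.mem_image] at hm
          obtain ⟨l, hl, rfl⟩ := hm
          exact habs l hl
        set M := G.sup id with hMdef
        have hsubG : G ⊆ Finset.Ioc n M := by
          intro m hm
          rw [Finset.mem_Ioc]
          exact ⟨by have := hG m hm; omega, Finset.le_sup (f := id) hm⟩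
        have hstep1 : ∑ m ∈ G, ((m : ℝ)) ^ (-(2 * σ)) ≤ ∑ m ∈ Finset.Ioc n M, ((m : ℝ)) ^ (-(2 * σ)) :=
          Finset.sum_le_sum_of_subset_of_nonneg hsubG fun i _ _ => hg0 i
        have hstep2 : ∑ m ∈ Finset.Ioc n M, ((m : ℝ)) ^ (-(2 * σ)) ≤
            (n : ℝ) ^ (1 - 2 * σ) / (2 * σ - 1) := by
          set a := M - n with hadef
          have h1n : (1:ℝ) ≤ (n : ℝ) := by exact_mod_cast hn
          have hanti : AntitoneOn (fun t : ℝ => t ^ (-(2 * σ)))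
              (Set.Icc (n : ℝ) ((n : ℝ) + (a : ℕ))) := by
            intro p hp q hq hpq
            exact Real.rpow_le_rpow_of_nonpos (by linarith [hp.1]) hpq (by linarith)
          have hkey := hanti.sum_le_integral
          have hIoc : Finset.Ioc n M = Finset.Ico (n + 1) (M + 1) := by
            ext k; simp only [Finset.mem_Ioc, Finset.mem_Ico]; omega
          rw [hIoc, Finset.sum_Ico_eq_sum_range]
          have hacnt : M + 1 - (n + 1) = a := by omega
          rw [hacnt]
          have hsum_eq : ∑ k ∈ Finset.range a, (((n + 1 + k : ℕ) : ℝ)) ^ (-(2 * σ)) =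
              ∑ i ∈ Finset.range a, ((n : ℝ) + ((i + 1 : ℕ) : ℝ)) ^ (-(2 * σ)) := by
            refine Finset.sum_congr rfl fun i _ => ?_
            congr 1
            push_cast
            ring
          have hne : -(2 * σ) ≠ -1 := by intro hcon; linarith
          have h0mem : (0:ℝ) ∉ Set.uIcc (n : ℝ) ((n : ℝ) + (a : ℕ)) := by
            rw [Set.uIcc_of_le (by linarith [Nat.cast_nonneg (α := ℝ) a])]
            rintro ⟨hc1, -⟩
            linarith
          have hint : ∫ t in (n : ℝ)..((n : ℝ) + (a : ℕ)), t ^ (-(2 * σ)) =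
              (((n : ℝ) + (a : ℕ)) ^ (-(2 * σ) + 1) - (n : ℝ) ^ (-(2 * σ) + 1)) / (-(2 * σ) + 1) :=
            integral_rpow (Or.inr ⟨hne, h0mem⟩)
          have hb0 : 0 ≤ ((n : ℝ) + (a : ℕ)) ^ (-(2 * σ) + 1) :=
            Real.rpow_nonneg (by linarith [Nat.cast_nonneg (α := ℝ) a]) _
          calc ∑ k ∈ Finset.range a, (((n + 1 + k : ℕ) : ℝ)) ^ (-(2 * σ))
              = ∑ i ∈ Finset.range a, ((n : ℝ) + ((i + 1 : ℕ) : ℝ)) ^ (-(2 * σ)) := hsum_eq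
            _ ≤ ∫ t in (n : ℝ)..((n : ℝ) + (a : ℕ)), t ^ (-(2 * σ)) := hkey
            _ = (((n : ℝ) + (a : ℕ)) ^ (-(2 * σ) + 1) - (n : ℝ) ^ (-(2 * σ) + 1)) / (-(2 * σ) + 1) := hint
            _ = ((n : ℝ) ^ (-(2 * σ) + 1) - ((n : ℝ) + (a : ℕ)) ^ (-(2 * σ) + 1)) / (2 * σ - 1) := by
                rw [div_eq_div_iff (by linarith) (by linarith)]; ring
            _ ≤ (n : ℝ) ^ (-(2 * σ) + 1) / (2 * σ - 1) :=
                (div_le_div_iff_of_pos_right h2σ).mpr (sub_le_self _ hb0)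
            _ = (n : ℝ) ^ (1 - 2 * σ) / (2 * σ - 1) := by
                rw [show -(2 * σ) + 1 = 1 - 2 * σ by ring]
        calc 2 * ∑ m ∈ G, ((m : ℝ)) ^ (-(2 * σ))
            ≤ 2 * ((n : ℝ) ^ (1 - 2 * σ) / (2 * σ - 1)) := by linarith [hstep1.trans hstep2]
          _ = (σ - 1 / 2)⁻¹ * (n : ℝ) ^ (1 - 2 * σ) := by
              have hinv : (σ - 1 / 2)⁻¹ = 2 / (2 * σ - 1) := by
                rw [show σ - 1 / 2 = (2 * σ - 1) / 2 by ring, inv_div]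
              rw [hinv]
              ring

/-- Tail of the Fourier coefficients controlled by the Sobolev norm. -/
private lemma coeff_tail_bound {σ : ℝ} (hσ : 1 / 2 < σ) {n : ℕ} (hn : 1 ≤ n) (c : ℤ → ℂ)
    (hc : Summable fun k : ℤ => ‖c k‖ ^ 2 * (1 + (k : ℝ) ^ 2) ^ σ) :
    Summable (fun l : ↥(((Finset.Icc (-(n : ℤ)) (n : ℤ) : Finset ℤ) : Set ℤ)ᶜ) => ‖c ↑l‖) ∧
    ∑' l : ↥(((Finset.Icc (-(n : ℤ)) (n : ℤ) : Finset ℤ) : Set ℤ)ᶜ), ‖c ↑l‖ ≤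
      Real.sqrt (∑' k : ℤ, ‖c k‖ ^ 2 * (1 + (k : ℝ) ^ 2) ^ σ) *
        ((σ - 1 / 2) ^ (-(1 / 2 : ℝ)) * (n : ℝ) ^ (-σ + 1 / 2)) := by
  set Tset : Set ℤ := ((Finset.Icc (-(n : ℤ)) (n : ℤ) : Finset ℤ) : Set ℤ)ᶜ with hTdef
  set u : ℤ → ℝ := fun l => ‖c l‖ * (1 + (l : ℝ) ^ 2) ^ (σ / 2) with hudef
  set v : ℤ → ℝ := fun l => (1 + (l : ℝ) ^ 2) ^ (-(σ / 2)) with hvdef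
  have hpos : ∀ l : ℤ, (0 : ℝ) < 1 + (l : ℝ) ^ 2 := fun l => by positivity
  have hu0 : ∀ l, 0 ≤ u l := fun l => mul_nonneg (norm_nonneg _) (Real.rpow_nonneg (hpos l).le _)
  have hv0 : ∀ l, 0 ≤ v l := fun l => Real.rpow_nonneg (hpos l).le _
  have hu2 : ∀ l, u l ^ 2 = ‖c l‖ ^ 2 * (1 + (l : ℝ) ^ 2) ^ σ := by
    intro l
    rw [hudef, mul_pow, rpow_sq_eq _ (hpos l).le, show σ / 2 * 2 = σ by ring]
  have hv2 : ∀ l, v l ^ 2 = (1 + (l : ℝ) ^ 2) ^ (-σ) := by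
    intro l
    rw [hvdef, rpow_sq_eq _ (hpos l).le, show -(σ / 2) * 2 = -σ by ring]
  have hav : ∀ l, ‖c l‖ = u l * v l := by
    intro l
    rw [hudef, hvdef, mul_assoc, ← Real.rpow_add (hpos l), add_neg_cancel, Real.rpow_zero, mul_one]
  have hu_sum : Summable (fun l : ℤ => u l ^ 2) := hc.congr fun l => (hu2 l).symm
  have hu_sub : Summable (fun l : Tset => u ↑l ^ 2) := hu_sum.subtype _
  set D : ℝ := (σ - 1 / 2)⁻¹ * (n : ℝ) ^ (1 - 2 * σ) with hDdef
  have hD0 : 0 ≤ D :=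
    mul_nonneg (inv_nonneg.2 (by linarith)) (Real.rpow_nonneg (Nat.cast_nonneg n) _)
  have hv_bound : ∀ s : Finset Tset, ∑ i ∈ s, v ↑i ^ 2 ≤ D := by
    intro s
    have heq : ∑ i ∈ s, v ↑i ^ 2 =
        ∑ l ∈ s.map (Function.Embedding.subtype _), (1 + (l : ℝ) ^ 2) ^ (-σ) := by
      rw [Finset.sum_map]
      exact Finset.sum_congr rfl fun i _ => hv2 _
    rw [heq, hDdef]
    apply tail_sum_bound hσ hn
    intro l hl
    rw [Finset.mem_map] at hl
    obtain ⟨⟨l', hl'⟩, -, rfl⟩ := hl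
    simpa [hTdef] using hl'
  have hv_sub : Summable (fun l : Tset => v ↑l ^ 2) :=
    summable_of_sum_le (fun _ => sq_nonneg _) hv_bound
  have hsumm : Summable (fun l : Tset => ‖c ↑l‖) := by
    refine Summable.of_nonneg_of_le (fun _ => norm_nonneg _) (fun l => ?_)
      (((hu_sub.add hv_sub).div_const 2))
    rw [hav]
    nlinarith [two_mul_le_add_sq (u ↑l) (v ↑l), sq_nonneg (u ↑l - v ↑l)]
  refine ⟨hsumm, ?_⟩
  have hCS : ∑' l : Tset, ‖c ↑l‖ ≤
      Real.sqrt (∑' l : Tset, u ↑l ^ 2) * Real.sqrt (∑' l : Tset, v ↑l ^ 2) := by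
    rw [tsum_congr fun l : Tset => hav ↑l]
    exact tsum_mul_le_sqrt _ _ (fun l => hu0 ↑l) (fun l => hv0 ↑l) hu_sub hv_sub
  have h1 : Real.sqrt (∑' l : Tset, u ↑l ^ 2) ≤
      Real.sqrt (∑' k : ℤ, ‖c k‖ ^ 2 * (1 + (k : ℝ) ^ 2) ^ σ) := by
    apply Real.sqrt_le_sqrt
    rw [← tsum_congr hu2]
    exact Summable.tsum_subtype_le (fun l : ℤ => u l ^ 2) Tset (fun l => sq_nonneg _) hu_sum
  have h2 : Real.sqrt (∑' l : Tset, v ↑l ^ 2) ≤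
      (σ - 1 / 2) ^ (-(1 / 2 : ℝ)) * (n : ℝ) ^ (-σ + 1 / 2) := by
    have hle : ∑' l : Tset, v ↑l ^ 2 ≤ D := tsum_le_of_sum_le' hD0 hv_bound
    refine (Real.sqrt_le_sqrt hle).trans (le_of_eq ?_)
    rw [hDdef, Real.sqrt_mul (inv_nonneg.2 (by linarith)), Real.sqrt_eq_rpow,
      Real.sqrt_eq_rpow, ← Real.rpow_neg_one (σ - 1 / 2),
      ← Real.rpow_mul (by linarith : (0:ℝ) ≤ σ - 1 / 2),
      ← Real.rpow_mul (Nat.cast_nonneg n),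
      show (-1 : ℝ) * (1 / 2) = -(1 / 2) by norm_num,
      show (1 - 2 * σ) * (1 / 2) = -σ + 1 / 2 by ring]
  calc ∑' l : Tset, ‖c ↑l‖ ≤ _ := hCS
    _ ≤ _ := mul_le_mul h1 h2 (Real.sqrt_nonneg _) (Real.sqrt_nonneg _)

/-- quadrature rules, exact on `𝒯_n` and bounded by `√κ ‖·‖_∞`,
satisfy for `σ > 1/2` and `f ∈ H^σ(𝕋)` (identified with its continuous
representative) the error bound
`|∫ f − I_n(f)| ≤ (1+√κ) (σ−1/2)^{-1/2} n^{-σ+1/2} ‖f‖_{H^σ}` for `n ≥ 1`. -/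
theorem quadrature_error_sobolev
    (A B : ℝ) (hA : 0 < A) (hB : 0 < B) (σ : ℝ) (hσ : 1 / 2 < σ)
    (L : ℕ → ℕ) (x : ∀ n, Fin (L n) → Torus) (w : ∀ n, Fin (L n) → ℂ)
    (hexact : ∀ n (p : Torus → ℂ), IsTrigPoly n p →
      ∑ k, p (x n k) * w n k = ∫ t, p t ∂haar)
    (hbound : ∀ n (g : Torus → ℂ), Continuous g →
      ‖∑ k, g (x n k) * w n k‖ ≤ Real.sqrt (B / A) * ⨆ t : Torus, ‖g t‖) :
    ∀ f : Torus → ℂ, InHσ σ f → Continuous f →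
      ∀ n : ℕ, 1 ≤ n →
        ‖(∫ t, f t ∂haar) - ∑ k, f (x n k) * w n k‖ ≤
          (1 + Real.sqrt (B / A)) * (σ - 1 / 2) ^ (-(1 / 2 : ℝ)) *
            (n : ℝ) ^ (-σ + 1 / 2) * Real.sqrt (sobolevNormSq σ f) := by
  intro f hf hcont n hn
  obtain ⟨-, hsob⟩ := hf
  obtain ⟨hsumT, hTle⟩ := coeff_tail_bound hσ hn (fourierCoeff f) hsob
  set S : Finset ℤ := Finset.Icc (-(n : ℤ)) (n : ℤ) with hS
  set Ttail : ℝ := ∑' l : ↥((S : Set ℤ)ᶜ), ‖fourierCoeff f ↑l‖ with hTt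
  have hT0 : 0 ≤ Ttail := tsum_nonneg fun _ => norm_nonneg _
  -- summability of the Fourier coefficients
  have hsum_a : Summable fun l : ℤ => ‖fourierCoeff f l‖ := by
    rw [← Set.Finite.summable_compl_iff (S.finite_toSet)]
    exact hsumT
  have hsum_c : Summable (fourierCoeff f) := Summable.of_norm hsum_a
  -- pointwise convergence of the Fourier series
  have hfn : ∀ (l : ℤ) (t : Torus), ‖fourier l t‖ = 1 := fun l t => Circle.norm_coe _
  set F : C(Torus, ℂ) := ⟨f, hcont⟩ with hF
  have hpt : ∀ y : Torus, HasSum (fun i : ℤ => fourierCoeff f i • fourier i y) (f y) :=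
    fun y => has_pointwise_sum_fourier_series_of_summable (f := F) hsum_c y
  -- the truncated Fourier series
  set p : Torus → ℂ := fun y => ∑ l ∈ S, fourierCoeff f l * fourier l y with hpdef
  have hptrig : IsTrigPoly n p := ⟨fourierCoeff f, by rw [hpdef]⟩
  have hp_cont : Continuous p := by
    rw [hpdef]
    exact continuous_finset_sum _ fun l _ => continuous_const.mul (map_continuous (fourier l))
  -- the uniform bound on f - p
  have hfp : ∀ y : Torus, ‖f y - p y‖ ≤ Ttail := by
    intro y
    have h1 := hpt y
    have h2 := Summable.sum_add_tsum_compl (s := S) h1.summable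
    rw [h1.tsum_eq] at h2
    have hpy : p y = ∑ l ∈ S, fourierCoeff f l • fourier l y := by
      rw [hpdef]
      exact Finset.sum_congr rfl fun l _ => (smul_eq_mul ..).symm
    have h3 : f y - p y = ∑' l : ↥((S : Set ℤ)ᶜ), fourierCoeff f ↑l • fourier (↑l) y := by
      rw [hpy]
      exact (eq_sub_of_add_eq' h2).symm
    rw [h3]
    have hnorms : Summable fun l : ↥((S : Set ℤ)ᶜ) => ‖fourierCoeff f ↑l • fourier (↑l) y‖ :=
      hsumT.congr fun l => by rw [norm_smul, hfn, mul_one]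
    refine (norm_tsum_le_tsum_norm hnorms).trans (le_of_eq ?_)
    rw [hTt]
    exact tsum_congr fun l => by rw [norm_smul, hfn, mul_one]
  -- integrability
  have hint_f : Integrable f haar :=
    hcont.integrable_of_hasCompactSupport (HasCompactSupport.of_compactSpace f)
  have hint_p : Integrable p haar :=
    hp_cont.integrable_of_hasCompactSupport (HasCompactSupport.of_compactSpace p)
  -- exactness on p
  have hIp : ∑ k, p (x n k) * w n k = ∫ t, p t ∂haar := hexact n p hptrig
  -- decomposition of the error
  have hdec : (∫ t, f t ∂haar) - ∑ k, f (x n k) * w n k =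
      (∫ t, (f t - p t) ∂haar) + ∑ k, (p (x n k) - f (x n k)) * w n k := by
    rw [integral_sub hint_f hint_p]
    have h3 : ∑ k, (p (x n k) - f (x n k)) * w n k =
        (∑ k, p (x n k) * w n k) - ∑ k, f (x n k) * w n k := by
      rw [← Finset.sum_sub_distrib]
      exact Finset.sum_congr rfl fun k _ => by ring
    rw [h3, hIp]
    ring
  have e1 : ‖∫ t, (f t - p t) ∂haar‖ ≤ Ttail := by
    have := norm_integral_le_of_norm_le_const (μ := haar) (f := fun t => f t - p t) (C := Ttail)
      (Filter.Eventually.of_forall hfp)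
    simpa [measure_univ] using this
  have e2 : ‖∑ k, (p (x n k) - f (x n k)) * w n k‖ ≤ Real.sqrt (B / A) * Ttail := by
    refine le_trans (hbound n (fun t => p t - f t) (hp_cont.sub hcont)) ?_
    refine mul_le_mul_of_nonneg_left ?_ (Real.sqrt_nonneg _)
    exact ciSup_le fun t => by rw [norm_sub_rev]; exact hfp t
  calc ‖(∫ t, f t ∂haar) - ∑ k, f (x n k) * w n k‖
      = ‖(∫ t, (f t - p t) ∂haar) + ∑ k, (p (x n k) - f (x n k)) * w n k‖ := by rw [hdec]
    _ ≤ ‖∫ t, (f t - p t) ∂haar‖ + ‖∑ k, (p (x n k) - f (x n k)) * w n k‖ := norm_add_le _ _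
    _ ≤ Ttail + Real.sqrt (B / A) * Ttail := add_le_add e1 e2
    _ = (1 + Real.sqrt (B / A)) * Ttail := by ring
    _ ≤ (1 + Real.sqrt (B / A)) * (Real.sqrt (∑' k : ℤ, ‖fourierCoeff f k‖ ^ 2 * (1 + (k : ℝ) ^ 2) ^ σ) *
          ((σ - 1 / 2) ^ (-(1 / 2 : ℝ)) * (n : ℝ) ^ (-σ + 1 / 2))) := by
        refine mul_le_mul_of_nonneg_left ?_ (by positivity)
        exact hTle
    _ = (1 + Real.sqrt (B / A)) * (σ - 1 / 2) ^ (-(1 / 2 : ℝ)) *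
          (n : ℝ) ^ (-σ + 1 / 2) * Real.sqrt (sobolevNormSq σ f) := by
        rw [sobolevNormSq]
        ring

end
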